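/- Let X̄ be a proper metric space, X ⊆ X̄ a nonempty closed subset, t_* ∈ ℝ ∪ {−∞}, Ω = X × (t_*, ∞), and let ψ̄ be a monotonic function with induced function ψ. Let F = (Λ, R_λ, s_λ) be a nested and discrete family of resonant sets in X̄, and let μ be a locally finite Borel measure with supp(μ) = X, μ(ψ(x, t)) > 0 for all (x, t) ∈ Ω, and all relevant sets Borel. Let n_* ∈ ℕ, L_* ≥ 0, d_* ≥ 0 and b_* > 2 d_*, and let f : [0, ∞] × ℝ → [0, ∞) be nondecreasing in the first and nonincreasing in the second argument. Assume: (i) (Ω, ψ) is d_*-separating with respect to F, i.e. for every t > t_* and every set Y which is either a singleton {y} with y ∈ X or of the form R(r, b), and every x ∈ X with x ∉ ψ̄(Y, t), the sets ψ(x, t + d_*) and ψ̄(Y, t + d_*) are disjoint, and for all x, y ∈ X and t > t_* with x ∈ ψ(y, t + d_*) one has ψ(x, t + d_*) ⊆ ψ(y, t); (ii) (Ω, ψ, μ) is f-decaying with respect to F, i.e. μ(ψ(x, r) ∩ ψ̄(R(r, b), r + s)) ≤ f(b, s) μ(ψ(x, r)) for all (x, r) ∈ Ω, b ≥ 0 and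 s ∈ ℝ; (iii) f is (d_*, b_*, n_*, L_*)-decaying, i.e. there exists c₀ < 1 with f(n_*(b + L_*) + d_*, b − 2 d_*) ≤ c₀ for all b > b_*. Then (Ω, ψ) is (b_* + 2 d_*, n_*, L_*)-diffuse with respect to F: for every b > b_* + 2 d_* and every (x, r) ∈ Ω there exists x' ∈ X such that ψ(x', r + b) ⊆ ψ(x, r) and ψ(x', r + b) is disjoint from ψ̄(R(r, n_*(b + L_*)), r + b). -/

import Mathlib

open Metric Set MeasureTheory

/-- If `(Ω, ψ)` is `d_*`-separating with respect to the nested,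
discrete family `F`, `(Ω, ψ, μ)` is `f`-decaying with respect to `F`, and `f` is
`(d_*, b_*, n_*, L_*)`-decaying, then `(Ω, ψ)` is `(b_* + 2d_*, n_*, L_*)`-diffuse
with respect to `F`. -/
theorem stmt5 {Xbar : Type*} [MetricSpace Xbar] [ProperSpace Xbar]
    [MeasurableSpace Xbar] [BorelSpace Xbar]
    (X : Set Xbar) (hXne : X.Nonempty) (hXcl : IsClosed X)
    (tstar : EReal)
    (ψ : Xbar → ℝ → Set Xbar)
    (hψ : ∀ (x : Xbar) (t : ℝ), tstar < (t : EReal) →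
      IsCompact (ψ x t) ∧ (ψ x t).Nonempty)
    (hψmono : ∀ (x : Xbar) (t s : ℝ), tstar < (t : EReal) → 0 ≤ s →
      ψ x (t + s) ⊆ ψ x t)
    {Λ : Type*} [Countable Λ]
    (R : Λ → Set Xbar) (sz : Λ → ℝ)
    (hsz : ∀ lam : Λ, tstar < (sz lam : EReal))
    (hnested : ∀ lam bet : Λ, sz lam ≤ sz bet → R lam ⊆ R bet)
    (hdiscrete : ∀ t : ℝ, {lam : Λ | sz lam ≤ t}.Finite)
    (μ : Measure Xbar) [IsLocallyFiniteMeasure μ]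
    -- μ has support X and gives positive measure to the formal balls
    (hsupp : ∀ x : Xbar, x ∈ X ↔ ∀ ε : ℝ, 0 < ε → 0 < μ (ball x ε))
    (hpos : ∀ x ∈ X, ∀ t : ℝ, tstar < (t : EReal) → 0 < μ (ψ x t ∩ X))
    (nstar : ℕ) (Lstar dstar bstar : ℝ)
    (hLstar : 0 ≤ Lstar) (hdstar : 0 ≤ dstar) (hbstar : 2 * dstar < bstar)
    (f : ℝ → ℝ → ℝ)
    (hf0 : ∀ b s : ℝ, 0 ≤ b → 0 ≤ f b s)
    (hfmono : ∀ b₁ b₂ s : ℝ, 0 ≤ b₁ → b₁ ≤ b₂ → f b₁ s ≤ f b₂ s)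
    (hfanti : ∀ b s₁ s₂ : ℝ, 0 ≤ b → s₁ ≤ s₂ → f b s₂ ≤ f b s₁)
    -- (i) (Ω, ψ) is d_*-separating with respect to F
    (hsepY : ∀ Y : Set Xbar,
      ((∃ y ∈ X, Y = {y}) ∨ (∃ r b : ℝ,
        Y = (⋃ lam : Λ, ⋃ (_ : sz lam ≤ r), R lam) \
              ⋃ lam : Λ, ⋃ (_ : sz lam ≤ r - b), R lam)) →
      ∀ t : ℝ, tstar < (t : EReal) → ∀ x ∈ X, x ∉ (⋃ y ∈ Y, ψ y t) →
        Disjoint (ψ x (t + dstar) ∩ X) (⋃ y ∈ Y, ψ y (t + dstar)))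
    (hsep2 : ∀ x ∈ X, ∀ y ∈ X, ∀ t : ℝ, tstar < (t : EReal) →
      x ∈ ψ y (t + dstar) ∩ X → ψ x (t + dstar) ∩ X ⊆ ψ y t ∩ X)
    -- (ii) (Ω, ψ, μ) is f-decaying with respect to F
    (hdecay : ∀ x ∈ X, ∀ r : ℝ, tstar < (r : EReal) → ∀ b : ℝ, 0 ≤ b → ∀ s : ℝ,
      μ ((ψ x r ∩ X) ∩
          ⋃ y ∈ ((⋃ lam : Λ, ⋃ (_ : sz lam ≤ r), R lam) \
                  ⋃ lam : Λ, ⋃ (_ : sz lam ≤ r - b), R lam),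
            ψ y (r + s)) ≤ ENNReal.ofReal (f b s) * μ (ψ x r ∩ X))
    -- (iii) f is (d_*, b_*, n_*, L_*)-decaying
    (c₀ : ℝ) (hc₀ : c₀ < 1)
    (hfdec : ∀ b : ℝ, bstar < b →
      f ((nstar : ℝ) * (b + Lstar) + dstar) (b - 2 * dstar) ≤ c₀) :
    -- conclusion: (b_* + 2d_*, n_*, L_*)-diffuse with respect to F
    ∀ b : ℝ, bstar + 2 * dstar < b → ∀ x ∈ X, ∀ r : ℝ, tstar < (r : EReal) →
      ∃ x' ∈ X, ψ x' (r + b) ∩ X ⊆ ψ x r ∩ X ∧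
        Disjoint (ψ x' (r + b) ∩ X)
          (⋃ y ∈ ((⋃ lam : Λ, ⋃ (_ : sz lam ≤ r), R lam) \
                   ⋃ lam : Λ, ⋃ (_ : sz lam ≤ r - (nstar : ℝ) * (b + Lstar)), R lam),
            ψ y (r + b)) := by
  intro b hb x hx r hr
  have hb0 : 0 < b := by linarith
  have hrd : tstar < ((r + dstar : ℝ) : EReal) :=
    lt_of_lt_of_le hr (EReal.coe_le_coe_iff.mpr (by linarith))
  set b' : ℝ := (nstar : ℝ) * (b + Lstar) + dstar with hb'def
  have hb'0 : 0 ≤ b' := by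
    have : (0:ℝ) ≤ (nstar : ℝ) := Nat.cast_nonneg _
    have : (0:ℝ) ≤ (nstar : ℝ) * (b + Lstar) := by positivity
    linarith
  set Y : Set Xbar := (⋃ lam : Λ, ⋃ (_ : sz lam ≤ r + dstar), R lam) \
      ⋃ lam : Λ, ⋃ (_ : sz lam ≤ (r + dstar) - b'), R lam with hYdef
  set S : Set Xbar := ψ x (r + dstar) ∩ X with hSdef
  have hSpos : 0 < μ S := hpos x hx _ hrd
  have hScomp : IsCompact S := ((hψ x _ hrd).1).inter_right hXcl
  have hSfin : μ S < ⊤ := hScomp.measure_lt_top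
  have hdec := hdecay x hx (r + dstar) hrd b' hb'0 (b - 2 * dstar)
  have hfb : f b' (b - 2 * dstar) ≤ c₀ := hfdec b (by linarith)
  have hlt : μ (S ∩ ⋃ y ∈ Y, ψ y ((r + dstar) + (b - 2 * dstar))) < μ S := by
    calc μ (S ∩ ⋃ y ∈ Y, ψ y ((r + dstar) + (b - 2 * dstar)))
        ≤ ENNReal.ofReal (f b' (b - 2 * dstar)) * μ S := hdec
      _ ≤ ENNReal.ofReal c₀ * μ S :=
          mul_le_mul_left (ENNReal.ofReal_le_ofReal hfb) _
      _ < 1 * μ S :=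
          ENNReal.mul_lt_mul_left hSpos.ne' hSfin.ne
            (ENNReal.ofReal_lt_one.mpr hc₀)
      _ = μ S := one_mul _
  have htime : (r + dstar) + (b - 2 * dstar) = r + b - dstar := by ring
  rw [htime] at hlt
  have hne : (S \ ⋃ y ∈ Y, ψ y (r + b - dstar)).Nonempty := by
    by_contra h
    rw [Set.not_nonempty_iff_eq_empty, Set.diff_eq_empty] at h
    rw [Set.inter_eq_left.mpr h] at hlt
    exact lt_irrefl _ hlt
  obtain ⟨x', hx'S, hx'notin⟩ := hne
  have hx'X : x' ∈ X := hx'S.2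
  refine ⟨x', hx'X, ?_, ?_⟩
  · -- ψ x' (r + b) ∩ X ⊆ ψ x r ∩ X
    have hsub1 : ψ x' (r + b) ⊆ ψ x' (r + dstar) := by
      have := hψmono x' (r + dstar) (b - dstar) hrd (by linarith)
      rwa [show (r + dstar) + (b - dstar) = r + b by ring] at this
    have hsub2 : ψ x' (r + dstar) ∩ X ⊆ ψ x r ∩ X :=
      hsep2 x' hx'X x hx r hr hx'S
    exact fun z hz => hsub2 ⟨hsub1 hz.1, hz.2⟩
  · -- disjointness
    have htd : tstar < ((r + b - dstar : ℝ) : EReal) :=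
      lt_of_lt_of_le hr (EReal.coe_le_coe_iff.mpr (by linarith))
    have hdisj := hsepY Y (Or.inr ⟨r + dstar, b', hYdef⟩) (r + b - dstar) htd
      x' hx'X hx'notin
    rw [show (r + b - dstar) + dstar = r + b by ring] at hdisj
    refine hdisj.mono subset_rfl ?_
    refine Set.biUnion_mono ?_ (fun _ _ => subset_rfl)
    intro y hy
    constructor
    · obtain ⟨lam, hlam⟩ := Set.mem_iUnion.mp hy.1
      obtain ⟨hle, hyR⟩ := Set.mem_iUnion.mp hlam
      exact Set.mem_iUnion.mpr ⟨lam, Set.mem_iUnion.mpr ⟨by linarith, hyR⟩⟩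
    · intro hmem
      apply hy.2
      obtain ⟨lam, hlam⟩ := Set.mem_iUnion.mp hmem
      obtain ⟨hle, hyR⟩ := Set.mem_iUnion.mp hlam
      refine Set.mem_iUnion.mpr ⟨lam, Set.mem_iUnion.mpr ⟨?_, hyR⟩⟩
      have : (r + dstar) - b' = r - (nstar : ℝ) * (b + Lstar) := by
        rw [hb'def]; ring
      linarith [hle, this.ge]
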